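/- For every integer k ≥ 0, the row-wise divergence map M ↦ (Σ_{j=1}^{3} ∂_{x_j}(x_j P_i))_{i=1,2,3} is a linear isomorphism from the space {M(P₁,P₂,P₃) : P₁, P₂, P₃ ∈ 𝒫_k and x P₁ + y P₂ + z P₃ = 0} onto G^{c,k}. -/

import Mathlib

open MvPolynomial

noncomputable section

/-- Real polynomials in the three variables `x, y, z` (indexed `0, 1, 2`). -/
abbrev P3 := MvPolynomial (Fin 3) ℝ

/-- Membership in `𝒫_m`, the space of polynomials of total degree at most `m`,
with the convention `𝒫_m = {0}` for `m < 0`. -/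
def memP (m : ℤ) (p : P3) : Prop := p = 0 ∨ (p.totalDegree : ℤ) ≤ m

/-- The row-wise divergence of the matrix `M(P₁,P₂,P₃)` with entries `M i j = x_j * P i`:
its `i`-th component is `Σ_j ∂_{x_j} (x_j P_i)`. -/
def rowDiv (P : Fin 3 → P3) : Fin 3 → P3 := fun i => ∑ j : Fin 3, pderiv j (X j * P i)

/-- The Koszul cross product `x × w`. -/
def crossX (w : Fin 3 → P3) : Fin 3 → P3 :=
  ![X 1 * w 2 - X 2 * w 1, X 2 * w 0 - X 0 * w 2, X 0 * w 1 - X 1 * w 0]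

namespace RowDivAux

/-- degree of a monomial exponent -/
def dg (m : Fin 3 →₀ ℕ) : ℕ := m.sum fun _ e => e

lemma dg_add (m n : Fin 3 →₀ ℕ) : dg (m + n) = dg m + dg n :=
  Finsupp.sum_add_index' (fun _ => rfl) (fun _ _ _ => rfl)

lemma dg_single (j : Fin 3) : dg (Finsupp.single j 1) = 1 := by
  simp [dg]

lemma dg_eq (m : Fin 3 →₀ ℕ) : dg m = m 0 + m 1 + m 2 := by
  rw [dg, Finsupp.sum_fintype _ _ (fun _ => rfl), Fin.sum_univ_three]

/-- The operator rescaling each homogeneous component of degree `d` by `g d`. -/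
def S (g : ℕ → ℝ) (p : P3) : P3 :=
  ∑ m ∈ p.support, monomial m (g (dg m) * coeff m p)

lemma coeff_S (g : ℕ → ℝ) (p : P3) (n : Fin 3 →₀ ℕ) :
    coeff n (S g p) = g (dg n) * coeff n p := by
  classical
  rw [S, coeff_sum]
  simp only [coeff_monomial]
  rw [Finset.sum_ite_eq' p.support n (fun m => g (dg m) * coeff m p)]
  split_ifs with h
  · rfl
  · rw [MvPolynomial.notMem_support_iff.mp h, mul_zero]

lemma S_zero (g : ℕ → ℝ) : S g 0 = 0 := by
  ext n; simp [coeff_S]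

lemma S_add (g : ℕ → ℝ) (p q : P3) : S g (p + q) = S g p + S g q := by
  ext n; simp [coeff_S, mul_add]

lemma S_S (g h : ℕ → ℝ) (p : P3) : S g (S h p) = S (fun d => g d * h d) p := by
  ext n; simp [coeff_S]; ring

lemma S_one (p : P3) : S (fun _ => 1) p = p := by
  ext n; simp [coeff_S]

lemma S_congr {g h : ℕ → ℝ} (hgh : ∀ d, g d = h d) (p : P3) : S g p = S h p := by
  ext n; simp [coeff_S, hgh]

lemma S_monomial (g : ℕ → ℝ) (m : Fin 3 →₀ ℕ) (a : ℝ) :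
    S g (monomial m a) = monomial m (g (dg m) * a) := by
  classical
  ext n
  simp only [coeff_S, coeff_monomial]
  split_ifs with h
  · subst h; rfl
  · rw [mul_zero]

lemma X_mul_monomial' (j : Fin 3) (m : Fin 3 →₀ ℕ) (a : ℝ) :
    (X j : P3) * monomial m a = monomial (Finsupp.single j 1 + m) a := by
  rw [monomial_single_add, pow_one]

lemma S_X_mul (g : ℕ → ℝ) (j : Fin 3) (p : P3) :
    S g (X j * p) = X j * S (fun d => g (d + 1)) p := by
  induction p using MvPolynomial.induction_on' with
  | monomial m a =>
      rw [X_mul_monomial', S_monomial, S_monomial, X_mul_monomial', dg_add, dg_single, add_comm 1 (dg m)]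
  | add p q hp hq =>
      rw [mul_add, S_add, hp, hq, S_add, mul_add]

lemma X_mul_pderiv_monomial (j : Fin 3) (m : Fin 3 →₀ ℕ) (a : ℝ) :
    (X j : P3) * pderiv j (monomial m a) = monomial m (a * (m j : ℝ)) := by
  rw [pderiv_monomial]
  by_cases h : m j = 0
  · simp [h]
  · rw [X_mul_monomial']
    have hm : Finsupp.single j 1 + (m - Finsupp.single j 1) = m := by
      ext i
      simp only [Finsupp.add_apply, Finsupp.tsub_apply, Finsupp.single_apply]
      split_ifs with hij
      · subst hij; omega
      · omega
    rw [hm]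

lemma euler (q : P3) :
    (X 0 : P3) * pderiv 0 q + X 1 * pderiv 1 q + X 2 * pderiv 2 q
      = S (fun d => (d : ℝ)) q := by
  induction q using MvPolynomial.induction_on' with
  | monomial m a =>
      rw [X_mul_pderiv_monomial, X_mul_pderiv_monomial, X_mul_pderiv_monomial, S_monomial,
        ← map_add, ← map_add]
      congr 1
      rw [dg_eq]
      push_cast
      ring
  | add p q hp hq =>
      rw [map_add, map_add, map_add, mul_add, mul_add, mul_add, S_add]
      rw [← hp, ← hq]
      ring

lemma coeff_pderiv (j : Fin 3) (p : P3) (n : Fin 3 →₀ ℕ) :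
    coeff n (pderiv j p) = ((n j : ℝ) + 1) * coeff (n + Finsupp.single j 1) p := by
  classical
  induction p using MvPolynomial.induction_on' with
  | monomial m a =>
      rw [pderiv_monomial, coeff_monomial, coeff_monomial]
      by_cases h : m = n + Finsupp.single j 1
      · subst h
        have h1 : (n + Finsupp.single j 1) - Finsupp.single j 1 = n := by
          ext i
          simp only [Finsupp.add_apply, Finsupp.tsub_apply, Finsupp.single_apply]
          split_ifs <;> omega
        rw [if_pos h1, Finsupp.add_apply, Finsupp.single_apply]
        simp only [if_pos rfl, if_true]
        push_cast
        ring
      · rw [if_neg h, mul_zero]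
        by_cases h2 : m - Finsupp.single j 1 = n
        · by_cases h3 : m j = 0
          · rw [if_pos h2, h3]; simp
          · exfalso
            apply h
            ext i
            have h2i := DFunLike.congr_fun h2 i
            simp only [Finsupp.tsub_apply, Finsupp.single_apply] at h2i
            simp only [Finsupp.add_apply, Finsupp.single_apply]
            by_cases hij : j = i
            · subst hij
              rw [if_pos rfl] at h2i ⊢
              omega
            · rw [if_neg hij] at h2i ⊢
              omega
        · rw [if_neg h2]
  | add p q hp hq =>
      rw [map_add, coeff_add, coeff_add, hp, hq, mul_add]

lemma totalDegree_S_le (g : ℕ → ℝ) (p : P3) : (S g p).totalDegree ≤ p.totalDegree := by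
  rw [totalDegree]
  apply Finset.sup_le
  intro n hn
  have h1 : coeff n (S g p) ≠ 0 := MvPolynomial.mem_support_iff.mp hn
  rw [coeff_S] at h1
  have h2 : coeff n p ≠ 0 := fun h => h1 (by rw [h, mul_zero])
  exact le_totalDegree (MvPolynomial.mem_support_iff.mpr h2)

lemma memP_S (g : ℕ → ℝ) {m : ℤ} {p : P3} (h : memP m p) : memP m (S g p) := by
  rcases h with h | h
  · left; rw [h, S_zero]
  · by_cases hz : S g p = 0
    · left; exact hz
    · right
      calc ((S g p).totalDegree : ℤ) ≤ (p.totalDegree : ℤ) := by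
            exact_mod_cast totalDegree_S_le g p
        _ ≤ m := h

lemma memP_pderiv {m : ℤ} {p : P3} (j : Fin 3) (h : memP m p) : memP (m - 1) (pderiv j p) := by
  by_cases hz : pderiv j p = 0
  · left; exact hz
  · right
    rcases h with h | h
    · exact absurd (by rw [h, map_zero]) hz
    have hne : (pderiv j p).support.Nonempty :=
      Finset.nonempty_iff_ne_empty.mpr (fun h0 => hz (MvPolynomial.support_eq_empty.mp h0))
    obtain ⟨n, hn, hsup⟩ := Finset.exists_mem_eq_sup _ hne (fun s : Fin 3 →₀ ℕ => dg s)
    have hco : coeff n (pderiv j p) ≠ 0 := MvPolynomial.mem_support_iff.mp hn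
    rw [coeff_pderiv] at hco
    have hco2 : coeff (n + Finsupp.single j 1) p ≠ 0 := by
      intro h0; rw [h0, mul_zero] at hco; exact hco rfl
    have hle : dg (n + Finsupp.single j 1) ≤ p.totalDegree :=
      le_totalDegree (MvPolynomial.mem_support_iff.mpr hco2)
    rw [dg_add, dg_single] at hle
    have htd : (pderiv j p).totalDegree = dg n := hsup
    have : (pderiv j p).totalDegree + 1 ≤ p.totalDegree := by omega
    omega

lemma memP_sub {m : ℤ} {p q : P3} (hp : memP m p) (hq : memP m q) : memP m (p - q) := by
  rcases hp with hp | hp <;> rcases hq with hq | hq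
  · left; rw [hp, hq, sub_zero]
  · subst hp
    right
    rw [zero_sub, totalDegree_neg]
    exact hq
  · subst hq
    right
    rw [sub_zero]
    exact hp
  · right
    calc ((p - q).totalDegree : ℤ) ≤ (max p.totalDegree q.totalDegree : ℕ) := by
          exact_mod_cast totalDegree_sub p q
      _ ≤ m := by
          rw [Nat.cast_max]
          exact max_le hp hq

lemma memP_X_mul {m : ℤ} (j : Fin 3) {p : P3} (h : memP (m - 1) p) : memP m (X j * p) := by
  rcases h with h | h
  · left; rw [h, mul_zero]
  · by_cases hz : (X j : P3) * p = 0
    · left; exact hz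
    · right
      have h1 : ((X j : P3) * p).totalDegree ≤ 1 + p.totalDegree := by
        calc ((X j : P3) * p).totalDegree ≤ (X j : P3).totalDegree + p.totalDegree :=
              totalDegree_mul _ _
          _ = 1 + p.totalDegree := by rw [totalDegree_X]
      have h2 : (((X j : P3) * p).totalDegree : ℤ) ≤ 1 + p.totalDegree := by exact_mod_cast h1
      omega

lemma rowDiv_eq (P : Fin 3 → P3) (i : Fin 3) :
    rowDiv P i = S (fun d => (d : ℝ) + 3) (P i) := by
  have h3 : S (fun d => (d : ℝ) + 3) (P i) =
      S (fun d => (d : ℝ)) (P i) + (P i + (P i + P i)) := by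
    ext n; simp [coeff_S]; ring
  show (∑ j : Fin 3, pderiv j (X j * P i)) = _
  rw [Fin.sum_univ_three, h3, ← euler]
  simp only [pderiv_mul, pderiv_X_self, one_mul]
  ring

lemma trace_S (g : ℕ → ℝ) (v : Fin 3 → P3)
    (h : X 0 * v 0 + X 1 * v 1 + X 2 * v 2 = 0) :
    X 0 * S g (v 0) + X 1 * S g (v 1) + X 2 * S g (v 2) = 0 := by
  have key : ∀ j : Fin 3, (X j : P3) * S g (v j) = S (fun d => g (d - 1)) (X j * v j) := by
    intro j
    rw [S_X_mul]
    exact congrArg (fun q => (X j : P3) * q)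
      (S_congr (fun d => by rw [Nat.add_sub_cancel]) (v j))
  rw [key 0, key 1, key 2, ← S_add, ← S_add, h, S_zero]

lemma single_sum (u : Fin 3 → P3) (i : Fin 3) :
    (Pi.single (M := fun _ => P3) i 1) 0 * u 0 + (Pi.single (M := fun _ => P3) i 1) 1 * u 1
      + (Pi.single (M := fun _ => P3) i 1) 2 * u 2 = u i := by
  fin_cases i <;> simp

lemma traceA (u : Fin 3 → P3) (h : X 0 * u 0 + X 1 * u 1 + X 2 * u 2 = 0) (i : Fin 3) :
    X 0 * pderiv i (u 0) + X 1 * pderiv i (u 1) + X 2 * pderiv i (u 2) = - u i := by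
  have h' := congrArg (pderiv i) h
  rw [map_add, map_add, pderiv_mul, pderiv_mul, pderiv_mul, map_zero,
    pderiv_X, pderiv_X, pderiv_X] at h'
  linear_combination h' - single_sum u i

/-- The Koszul exactness with degree bounds. -/
lemma koszul {k : ℤ} (v : Fin 3 → P3) (hdeg : ∀ i, memP k (v i))
    (h : X 0 * v 0 + X 1 * v 1 + X 2 * v 2 = 0) :
    ∃ w : Fin 3 → P3, (∀ i, memP (k - 1) (w i)) ∧ v = crossX w := by
  set g : ℕ → ℝ := fun d => -((d : ℝ) + 1)⁻¹ with hg
  set u : Fin 3 → P3 := fun j => S g (v j) with hu_def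
  have hu : X 0 * u 0 + X 1 * u 1 + X 2 * u 2 = 0 := trace_S g v h
  refine ⟨![pderiv 1 (u 2) - pderiv 2 (u 1), pderiv 2 (u 0) - pderiv 0 (u 2),
      pderiv 0 (u 1) - pderiv 1 (u 0)], ?_, ?_⟩
  · intro i
    fin_cases i <;>
      exact memP_sub (memP_pderiv _ (memP_S g (hdeg _))) (memP_pderiv _ (memP_S g (hdeg _)))
  · have hrec : ∀ j, v j = - u j - S (fun d => (d : ℝ)) (u j) := by
      intro j
      have h1 : - u j - S (fun d => (d : ℝ)) (u j)
          = S (fun d => (-(1 + (d : ℝ))) * g d) (v j) := by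
        rw [hu_def]
        ext n
        simp only [coeff_sub, coeff_neg, coeff_S]
        ring
      rw [h1, S_congr (h := fun _ => 1), S_one]
      intro d
      rw [hg]
      have hd : (d : ℝ) + 1 ≠ 0 := by positivity
      field_simp
      ring
    funext i
    fin_cases i
    · show v 0 = crossX _ 0
      simp only [crossX, Matrix.cons_val_zero, Matrix.cons_val_one, Matrix.head_cons,
        Matrix.cons_val_two, Matrix.tail_cons]
      linear_combination hrec 0 - traceA u hu 0 + euler (u 0)
    · show v 1 = crossX _ 1
      simp only [crossX, Matrix.cons_val_zero, Matrix.cons_val_one, Matrix.head_cons,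
        Matrix.cons_val_two, Matrix.tail_cons]
      linear_combination hrec 1 - traceA u hu 1 + euler (u 1)
    · show v 2 = crossX _ 2
      simp only [crossX, Matrix.cons_val_zero, Matrix.cons_val_one, Matrix.head_cons,
        Matrix.cons_val_two, Matrix.tail_cons]
      linear_combination hrec 2 - traceA u hu 2 + euler (u 2)

end RowDivAux

/-- The row-wise divergence is a linear isomorphism from the trace-free space
`{M(P₁,P₂,P₃) : Pᵢ ∈ 𝒫_k, x P₁ + y P₂ + z P₃ = 0}` (identified with the space of its
generating triples) onto `G^{c,k} = {x × w : wᵢ ∈ 𝒫_{k-1}}`. -/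
theorem rowDiv_isomorphism_onto_Gck (k : ℕ) :
    (∀ P Q : Fin 3 → P3, rowDiv (P + Q) = rowDiv P + rowDiv Q) ∧
    (∀ (c : ℝ) (P : Fin 3 → P3), rowDiv (c • P) = c • rowDiv P) ∧
    Set.BijOn rowDiv
      {P : Fin 3 → P3 | (∀ i, memP (k : ℤ) (P i)) ∧
        X 0 * P 0 + X 1 * P 1 + X 2 * P 2 = 0}
      {v : Fin 3 → P3 | ∃ w : Fin 3 → P3, (∀ i, memP ((k : ℤ) - 1) (w i)) ∧ v = crossX w} := by
  open RowDivAux in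
  have g3 : ℕ → ℝ := fun d => (d : ℝ) + 3
  refine ⟨?_, ?_, ?_, ?_, ?_⟩
  · intro P Q
    funext i
    simp [rowDiv, Pi.add_apply, mul_add, map_add, Finset.sum_add_distrib]
  · intro c P
    funext i
    simp only [rowDiv, Pi.smul_apply, mul_smul_comm, Derivation.map_smul, Finset.smul_sum]
  · -- MapsTo
    rintro P ⟨hPdeg, hPtr⟩
    have hv : ∀ i, rowDiv P i = S (fun d => (d : ℝ) + 3) (P i) := rowDiv_eq P
    refine koszul (rowDiv P) (fun i => by rw [hv i]; exact memP_S _ (hPdeg i)) ?_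
    rw [hv 0, hv 1, hv 2]
    exact trace_S _ P hPtr
  · -- InjOn
    intro P _ Q _ hPQ
    funext i
    have h1 : S (fun d => (d : ℝ) + 3) (P i) = S (fun d => (d : ℝ) + 3) (Q i) := by
      rw [← rowDiv_eq, ← rowDiv_eq, hPQ]
    have h2 := congrArg (S (fun d => ((d : ℝ) + 3)⁻¹)) h1
    rwa [S_S, S_S, S_congr (h := fun _ => 1), S_one, S_congr (h := fun _ => 1), S_one] at h2
      <;> · intro d
            have : (d : ℝ) + 3 ≠ 0 := by positivity
            field_simp
  · -- SurjOn
    rintro v ⟨w, hwdeg, rfl⟩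
    have hvdeg : ∀ i, memP (k : ℤ) (crossX w i) := by
      intro i
      fin_cases i <;>
        exact memP_sub (memP_X_mul _ (hwdeg _)) (memP_X_mul _ (hwdeg _))
    have hvtr : X 0 * crossX w 0 + X 1 * crossX w 1 + X 2 * crossX w 2 = 0 := by
      simp only [crossX, Matrix.cons_val_zero, Matrix.cons_val_one, Matrix.head_cons,
        Matrix.cons_val_two, Matrix.tail_cons]
      ring
    refine ⟨fun i => S (fun d => ((d : ℝ) + 3)⁻¹) (crossX w i), ⟨?_, ?_⟩, ?_⟩
    · intro i
      exact memP_S _ (hvdeg i)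
    · exact trace_S _ _ hvtr
    · funext i
      rw [rowDiv_eq, S_S, S_congr (h := fun _ => 1), S_one]
      intro d
      have : (d : ℝ) + 3 ≠ 0 := by positivity
      field_simp
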